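/- In the construction graph with orthogonal quadruple (a,b,c,d): d((a,b,c), u) = 4, d(u, (d,c,b)) = 3, d((a,b,c), v) = 3, and d(v, (d,c,b)) = 4; consequently every path from (a,b,c) to (d,c,b) passing through u or v has length at least 7. -/

import Mathlib

/-- The total weight of a walk, given as the list of its vertices. -/
def walkWeight {V : Type*} (wt : V → V → ℕ∞) : List V → ℕ∞
  | x :: y :: rest => wt x y + walkWeight wt (y :: rest)
  | _ => 0

/-- `l` is (the vertex list of) a walk from `x` to `y`. -/
def IsWalk {V : Type*} (l : List V) (x y : V) : Prop :=
  l ≠ [] ∧ l.head? = some x ∧ l.getLast? = some y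

/-- Shortest-path distance from `x` to `y`. -/
noncomputable def gdist {V : Type*} (wt : V → V → ℕ∞) (x y : V) : ℕ∞ :=
  sInf {w | ∃ l : List V, IsWalk l x y ∧ walkWeight wt l = w}

lemma walkWeight_ge {V : Type*} (wt : V → V → ℕ∞) (p : V → ℕ∞)
    (hfeas : ∀ x y, p y ≤ p x + wt x y) :
    ∀ (l : List V) (x y : V), IsWalk l x y → p y ≤ p x + walkWeight wt l := by
  intro l
  induction l with
  | nil => intro x y h; exact absurd rfl h.1
  | cons a t ih =>
    intro x y h
    obtain ⟨-, h1, h2⟩ := h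
    simp only [List.head?_cons, Option.some.injEq] at h1
    subst h1
    cases t with
    | nil =>
      simp only [List.getLast?_singleton, Option.some.injEq] at h2
      subst h2
      simp [walkWeight]
    | cons b t' =>
      rw [List.getLast?_cons_cons] at h2
      calc p y ≤ p b + walkWeight wt (b :: t') := ih b y ⟨by simp, rfl, h2⟩
        _ ≤ (p a + wt a b) + walkWeight wt (b :: t') := add_le_add (hfeas a b) le_rfl
        _ = p a + walkWeight wt (a :: b :: t') := by rw [walkWeight]; ring

lemma walkWeight_ge' {V : Type*} (wt : V → V → ℕ∞) (p : V → ℕ∞)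
    (hfeas : ∀ x y, p x ≤ p y + wt x y) :
    ∀ (l : List V) (x y : V), IsWalk l x y → p x ≤ p y + walkWeight wt l := by
  intro l
  induction l with
  | nil => intro x y h; exact absurd rfl h.1
  | cons a t ih =>
    intro x y h
    obtain ⟨-, h1, h2⟩ := h
    simp only [List.head?_cons, Option.some.injEq] at h1
    subst h1
    cases t with
    | nil =>
      simp only [List.getLast?_singleton, Option.some.injEq] at h2
      subst h2
      simp [walkWeight]
    | cons b t' =>
      rw [List.getLast?_cons_cons] at h2
      calc p a ≤ p b + wt a b := hfeas a b
        _ ≤ (p y + walkWeight wt (b :: t')) + wt a b :=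
            add_le_add (ih b y ⟨by simp, rfl, h2⟩) le_rfl
        _ = p y + walkWeight wt (a :: b :: t') := by rw [walkWeight]; ring

lemma walkWeight_split {V : Type*} (wt : V → V → ℕ∞) (z : V) :
    ∀ (xs ys : List V),
      walkWeight wt (xs ++ z :: ys) =
        walkWeight wt (xs ++ [z]) + walkWeight wt (z :: ys) := by
  intro xs ys
  induction xs with
  | nil => simp [walkWeight]
  | cons a xs' ih =>
    cases xs' with
    | nil => simp [walkWeight, add_assoc]
    | cons b xs'' =>
      have h1 : walkWeight wt ((a :: b :: xs'') ++ z :: ys)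
          = wt a b + walkWeight wt ((b :: xs'') ++ z :: ys) := by
        simp [walkWeight]
      have h2 : walkWeight wt ((a :: b :: xs'') ++ [z])
          = wt a b + walkWeight wt ((b :: xs'') ++ [z]) := by
        simp [walkWeight]
      rw [h1, ih, h2]; ring

open Classical in
/-- classification of vertices into the 8 parts -/
noncomputable def cls8 {V : Type*} (u v : V) (A B X Y D : Set V) (x : V) : Fin 8 :=
  if x = u then 0 else if x = v then 1 else if x ∈ A then 2 else if x ∈ B then 3
  else if x ∈ X then 4 else if x ∈ Y then 5 else if x ∈ D then 6 else 7

/-- weight matrix on classes (⊤ = absent or irrelevant) -/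
def Wmat : Fin 8 → Fin 8 → ℕ∞ :=
  ![![⊤, 2, 0, 0, 1, 2, 2, ⊤],
    ![2, ⊤, ⊤, 2, 1, 2, 3, 4],
    ![4, ⊤, ⊤, 1, ⊤, ⊤, ⊤, ⊤],
    ![3, 2, 1, 1, ⊤, 1, ⊤, ⊤],
    ![1, 1, ⊤, ⊤, ⊤, 1, ⊤, ⊤],
    ![2, 2, ⊤, 1, 1, ⊤, 1, ⊤],
    ![2, 0, ⊤, ⊤, ⊤, 1, 1, 1],
    ![⊤, 0, ⊤, ⊤, ⊤, ⊤, 1, ⊤]]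

/-- potential: shortest distances from class ABC -/
def pp1 : Fin 8 → ℕ∞ := ![4, 3, 0, 1, 3, 2, 3, 4]

/-- potential: shortest distances to class DCB -/
def pp2 : Fin 8 → ℕ∞ := ![3, 4, 4, 3, 3, 2, 1, 0]

lemma pp1_feas : ∀ i j : Fin 8, pp1 j ≤ pp1 i + Wmat i j := by decide

lemma pp2_feas : ∀ i j : Fin 8, pp2 i ≤ pp2 j + Wmat i j := by decide

/-- In the reduction graph, for the vertices `abc = (a,b,c)` and `dcb = (d,c,b)`:
`d(abc,u) = 4`, `d(u,dcb) = 3`, `d(abc,v) = 3`, `d(v,dcb) = 4`; consequently every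
walk from `abc` to `dcb` passing through `u` or `v` has weight at least 7. -/
theorem stmt_14 {V : Type*} [Fintype V] (wt : V → V → ℕ∞) (u v : V)
    (ABC AB ADX ADY DC DCB : Set V) (abc dcb : V)
    (habc : abc ∈ ABC) (hdcb : dcb ∈ DCB)
    -- the eight parts are pairwise disjoint and cover the vertex set
    (hdisj : ([{u}, {v}, ABC, AB, ADX, ADY, DC, DCB] : List (Set V)).Pairwise Disjoint)
    (hpart : ∀ x : V, x = u ∨ x = v ∨ x ∈ ABC ∨ x ∈ AB ∨ x ∈ ADX ∨ x ∈ ADY ∨ x ∈ DC ∨ x ∈ DCB)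
    -- constant-part arcs incident to u and v (⊤ means the arc is absent)
    (hABC : ∀ x ∈ ABC, wt x u = 4 ∧ wt u x = 0 ∧ wt x v = ⊤ ∧ wt v x = ⊤)
    (hAB : ∀ x ∈ AB, wt u x = 0 ∧ wt x u = 3 ∧ wt x v = 2 ∧ wt v x = 2)
    (hADX : ∀ x ∈ ADX, wt u x = 1 ∧ wt x u = 1 ∧ wt v x = 1 ∧ wt x v = 1)
    (hADY : ∀ x ∈ ADY, wt u x = 2 ∧ wt x u = 2 ∧ wt v x = 2 ∧ wt x v = 2)
    (hDC : ∀ x ∈ DC, wt x u = 2 ∧ wt u x = 2 ∧ wt x v = 0 ∧ wt v x = 3)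
    (hDCB : ∀ x ∈ DCB, wt x v = 0 ∧ wt v x = 4 ∧ wt x u = ⊤ ∧ wt u x = ⊤)
    (huv : wt u v = 2 ∧ wt v u = 2) (hloop : wt u u = ⊤ ∧ wt v v = ⊤)
    -- all arcs of the variable part have weight 1 (or are absent)
    (hvar1 : ∀ x y : V, x ≠ u → x ≠ v → y ≠ u → y ≠ v → wt x y = 1 ∨ wt x y = ⊤)
    -- variable-part arcs only join consecutive layers (or are index-switching)
    (hadj : ∀ x y : V, x ≠ u → x ≠ v → y ≠ u → y ≠ v → wt x y ≠ ⊤ →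
      (x ∈ ABC ∧ y ∈ AB) ∨ (x ∈ AB ∧ y ∈ ABC) ∨ (x ∈ AB ∧ y ∈ AB) ∨
      (x ∈ AB ∧ y ∈ ADY) ∨ (x ∈ ADY ∧ y ∈ AB) ∨ (x ∈ ADX ∧ y ∈ ADY) ∨
      (x ∈ ADY ∧ y ∈ ADX) ∨ (x ∈ ADY ∧ y ∈ DC) ∨ (x ∈ DC ∧ y ∈ ADY) ∨
      (x ∈ DC ∧ y ∈ DC) ∨ (x ∈ DC ∧ y ∈ DCB) ∨ (x ∈ DCB ∧ y ∈ DC))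
    -- abc has a weight-1 edge to AB, and dcb has a weight-1 edge to DC
    (hABCnb : ∃ y ∈ AB, wt abc y = 1 ∧ wt y abc = 1)
    (hDCBnb : ∃ y ∈ DC, wt dcb y = 1 ∧ wt y dcb = 1) :
    gdist wt abc u = 4 ∧ gdist wt u dcb = 3 ∧ gdist wt abc v = 3 ∧ gdist wt v dcb = 4 ∧
    ∀ l : List V, IsWalk l abc dcb → (u ∈ l ∨ v ∈ l) → 7 ≤ walkWeight wt l := by
  classical
  simp only [List.pairwise_cons, List.mem_cons, List.mem_singleton, forall_eq_or_imp,
    forall_eq, List.not_mem_nil, List.Pairwise.nil] at hdisj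
  obtain ⟨⟨duv, duA, duB, duX, duY, duD, duC, -⟩, ⟨dvA, dvB, dvX, dvY, dvD, dvC, -⟩,
    ⟨dAB, dAX, dAY, dAD, dAC, -⟩, ⟨dBX, dBY, dBD, dBC, -⟩, ⟨dXY, dXD, dXC, -⟩,
    ⟨dYD, dYC, -⟩, ⟨dDD, -⟩, -, -⟩ := hdisj
  have huv' : u ≠ v := by simpa using duv
  have huA : u ∉ ABC := by simpa using duA
  have huB : u ∉ AB := by simpa using duB
  have huX : u ∉ ADX := by simpa using duX
  have huY : u ∉ ADY := by simpa using duY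
  have huD : u ∉ DC := by simpa using duD
  have huC : u ∉ DCB := by simpa using duC
  have hvA : v ∉ ABC := by simpa using dvA
  have hvB : v ∉ AB := by simpa using dvB
  have hvX : v ∉ ADX := by simpa using dvX
  have hvY : v ∉ ADY := by simpa using dvY
  have hvD : v ∉ DC := by simpa using dvD
  have hvC : v ∉ DCB := by simpa using dvC
  set c : V → Fin 8 := cls8 u v ABC AB ADX ADY DC with hc
  have hcu : c u = 0 := by simp [hc, cls8]
  have hcv : c v = 1 := by simp [hc, cls8, huv'.symm]
  have hcA : ∀ x ∈ ABC, c x = 2 := by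
    intro x hx
    have h1 : x ≠ u := fun h => huA (h ▸ hx)
    have h2 : x ≠ v := fun h => hvA (h ▸ hx)
    simp [hc, cls8, h1, h2, hx]
  have hcB : ∀ x ∈ AB, c x = 3 := by
    intro x hx
    have h1 : x ≠ u := fun h => huB (h ▸ hx)
    have h2 : x ≠ v := fun h => hvB (h ▸ hx)
    have h3 : x ∉ ABC := Set.disjoint_right.mp dAB hx
    simp [hc, cls8, h1, h2, h3, hx]
  have hcX : ∀ x ∈ ADX, c x = 4 := by
    intro x hx
    have h1 : x ≠ u := fun h => huX (h ▸ hx)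
    have h2 : x ≠ v := fun h => hvX (h ▸ hx)
    have h3 : x ∉ ABC := Set.disjoint_right.mp dAX hx
    have h4 : x ∉ AB := Set.disjoint_right.mp dBX hx
    simp [hc, cls8, h1, h2, h3, h4, hx]
  have hcY : ∀ x ∈ ADY, c x = 5 := by
    intro x hx
    have h1 : x ≠ u := fun h => huY (h ▸ hx)
    have h2 : x ≠ v := fun h => hvY (h ▸ hx)
    have h3 : x ∉ ABC := Set.disjoint_right.mp dAY hx
    have h4 : x ∉ AB := Set.disjoint_right.mp dBY hx
    have h5 : x ∉ ADX := Set.disjoint_right.mp dXY hx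
    simp [hc, cls8, h1, h2, h3, h4, h5, hx]
  have hcD : ∀ x ∈ DC, c x = 6 := by
    intro x hx
    have h1 : x ≠ u := fun h => huD (h ▸ hx)
    have h2 : x ≠ v := fun h => hvD (h ▸ hx)
    have h3 : x ∉ ABC := Set.disjoint_right.mp dAD hx
    have h4 : x ∉ AB := Set.disjoint_right.mp dBD hx
    have h5 : x ∉ ADX := Set.disjoint_right.mp dXD hx
    have h6 : x ∉ ADY := Set.disjoint_right.mp dYD hx
    simp [hc, cls8, h1, h2, h3, h4, h5, h6, hx]
  have hcC : ∀ x ∈ DCB, c x = 7 := by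
    intro x hx
    have h1 : x ≠ u := fun h => huC (h ▸ hx)
    have h2 : x ≠ v := fun h => hvC (h ▸ hx)
    have h3 : x ∉ ABC := Set.disjoint_right.mp dAC hx
    have h4 : x ∉ AB := Set.disjoint_right.mp dBC hx
    have h5 : x ∉ ADX := Set.disjoint_right.mp dXC hx
    have h6 : x ∉ ADY := Set.disjoint_right.mp dYC hx
    have h7 : x ∉ DC := Set.disjoint_right.mp dDD hx
    simp [hc, cls8, h1, h2, h3, h4, h5, h6, h7]
  have hstruct : ∀ x y : V, wt x y = ⊤ ∨ wt x y = Wmat (c x) (c y) := by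
    intro x y
    by_cases hxu : x = u
    · subst hxu
      rcases hpart y with rfl | rfl | hy | hy | hy | hy | hy | hy
      · exact Or.inl hloop.1
      · right; rw [hcu, hcv, huv.1]; decide
      · right; rw [hcu, hcA y hy, (hABC y hy).2.1]; decide
      · right; rw [hcu, hcB y hy, (hAB y hy).1]; decide
      · right; rw [hcu, hcX y hy, (hADX y hy).1]; decide
      · right; rw [hcu, hcY y hy, (hADY y hy).1]; decide
      · right; rw [hcu, hcD y hy, (hDC y hy).2.1]; decide
      · exact Or.inl (hDCB y hy).2.2.2
    by_cases hxv : x = v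
    · subst hxv
      rcases hpart y with rfl | rfl | hy | hy | hy | hy | hy | hy
      · right; rw [hcv, hcu, huv.2]; decide
      · exact Or.inl hloop.2
      · exact Or.inl (hABC y hy).2.2.2
      · right; rw [hcv, hcB y hy, (hAB y hy).2.2.2]; decide
      · right; rw [hcv, hcX y hy, (hADX y hy).2.2.1]; decide
      · right; rw [hcv, hcY y hy, (hADY y hy).2.2.1]; decide
      · right; rw [hcv, hcD y hy, (hDC y hy).2.2.2]; decide
      · right; rw [hcv, hcC y hy, (hDCB y hy).2.1]; decide
    by_cases hyu : y = u
    · subst hyu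
      rcases hpart x with rfl | rfl | hx | hx | hx | hx | hx | hx
      · exact absurd rfl hxu
      · exact absurd rfl hxv
      · right; rw [hcu, hcA x hx, (hABC x hx).1]; decide
      · right; rw [hcu, hcB x hx, (hAB x hx).2.1]; decide
      · right; rw [hcu, hcX x hx, (hADX x hx).2.1]; decide
      · right; rw [hcu, hcY x hx, (hADY x hx).2.1]; decide
      · right; rw [hcu, hcD x hx, (hDC x hx).1]; decide
      · exact Or.inl (hDCB x hx).2.2.1
    by_cases hyv : y = v
    · subst hyv
      rcases hpart x with rfl | rfl | hx | hx | hx | hx | hx | hx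
      · exact absurd rfl hxu
      · exact absurd rfl hxv
      · exact Or.inl (hABC x hx).2.2.1
      · right; rw [hcv, hcB x hx, (hAB x hx).2.2.1]; decide
      · right; rw [hcv, hcX x hx, (hADX x hx).2.2.2]; decide
      · right; rw [hcv, hcY x hx, (hADY x hx).2.2.2]; decide
      · right; rw [hcv, hcD x hx, (hDC x hx).2.2.1]; decide
      · right; rw [hcv, hcC x hx, (hDCB x hx).1]; decide
    rcases hvar1 x y hxu hxv hyu hyv with h1 | h1
    · right
      have hne : wt x y ≠ ⊤ := by simp [h1]
      rcases hadj x y hxu hxv hyu hyv hne with ⟨ha, hb⟩ | ⟨ha, hb⟩ | ⟨ha, hb⟩ | ⟨ha, hb⟩ |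
        ⟨ha, hb⟩ | ⟨ha, hb⟩ | ⟨ha, hb⟩ | ⟨ha, hb⟩ | ⟨ha, hb⟩ | ⟨ha, hb⟩ | ⟨ha, hb⟩ | ⟨ha, hb⟩
      · rw [hcA x ha, hcB y hb, h1]; decide
      · rw [hcB x ha, hcA y hb, h1]; decide
      · rw [hcB x ha, hcB y hb, h1]; decide
      · rw [hcB x ha, hcY y hb, h1]; decide
      · rw [hcY x ha, hcB y hb, h1]; decide
      · rw [hcX x ha, hcY y hb, h1]; decide
      · rw [hcY x ha, hcX y hb, h1]; decide
      · rw [hcY x ha, hcD y hb, h1]; decide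
      · rw [hcD x ha, hcY y hb, h1]; decide
      · rw [hcD x ha, hcD y hb, h1]; decide
      · rw [hcD x ha, hcC y hb, h1]; decide
      · rw [hcC x ha, hcD y hb, h1]; decide
    · exact Or.inl h1
  have hfeas1 : ∀ x y : V, pp1 (c y) ≤ pp1 (c x) + wt x y := by
    intro x y
    rcases hstruct x y with h | h
    · rw [h, add_top]; exact le_top
    · rw [h]; exact pp1_feas _ _
  have hfeas2 : ∀ x y : V, pp2 (c x) ≤ pp2 (c y) + wt x y := by
    intro x y
    rcases hstruct x y with h | h
    · rw [h, add_top]; exact le_top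
    · rw [h]; exact pp2_feas _ _
  have hlow1 : ∀ (l : List V) (x y : V), IsWalk l x y →
      pp1 (c y) ≤ pp1 (c x) + walkWeight wt l :=
    walkWeight_ge wt (fun z => pp1 (c z)) hfeas1
  have hlow2 : ∀ (l : List V) (x y : V), IsWalk l x y →
      pp2 (c x) ≤ pp2 (c y) + walkWeight wt l :=
    walkWeight_ge' wt (fun z => pp2 (c z)) hfeas2
  have key1 : ∀ (l : List V) (y : V), IsWalk l abc y → pp1 (c y) ≤ walkWeight wt l := by
    intro l y hl
    have := hlow1 l abc y hl
    rwa [hcA abc habc, show pp1 2 = 0 by decide, zero_add] at this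
  have key2 : ∀ (l : List V) (x : V), IsWalk l x dcb → pp2 (c x) ≤ walkWeight wt l := by
    intro l x hl
    have := hlow2 l x dcb hl
    rwa [hcC dcb hdcb, show pp2 7 = 0 by decide, zero_add] at this
  have d1 : gdist wt abc u = 4 := by
    refine le_antisymm (sInf_le ⟨[abc, u], ⟨by simp, rfl, rfl⟩, ?_⟩) (le_sInf ?_)
    · simp [walkWeight, (hABC abc habc).1]
    · rintro w ⟨l, hl, rfl⟩
      have := key1 l u hl
      rwa [hcu, show pp1 0 = 4 by decide] at this
  have d2 : gdist wt u dcb = 3 := by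
    obtain ⟨yD, hyD, -, hd2⟩ := hDCBnb
    refine le_antisymm (sInf_le ⟨[u, yD, dcb], ⟨by simp, rfl, rfl⟩, ?_⟩) (le_sInf ?_)
    · simp [walkWeight, (hDC yD hyD).2.1, hd2]; decide
    · rintro w ⟨l, hl, rfl⟩
      have := key2 l u hl
      rwa [hcu, show pp2 0 = 3 by decide] at this
  have d3 : gdist wt abc v = 3 := by
    obtain ⟨yB, hyB, hb1, -⟩ := hABCnb
    refine le_antisymm (sInf_le ⟨[abc, yB, v], ⟨by simp, rfl, rfl⟩, ?_⟩) (le_sInf ?_)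
    · simp [walkWeight, hb1, (hAB yB hyB).2.2.1]; decide
    · rintro w ⟨l, hl, rfl⟩
      have := key1 l v hl
      rwa [hcv, show pp1 1 = 3 by decide] at this
  have d4 : gdist wt v dcb = 4 := by
    refine le_antisymm (sInf_le ⟨[v, dcb], ⟨by simp, rfl, rfl⟩, ?_⟩) (le_sInf ?_)
    · simp [walkWeight, (hDCB dcb hdcb).2.1]
    · rintro w ⟨l, hl, rfl⟩
      have := key2 l v hl
      rwa [hcv, show pp2 1 = 4 by decide] at this
  refine ⟨d1, d2, d3, d4, ?_⟩
  intro l hl hm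
  have main : ∀ z : V, z ∈ l → z ∉ ABC → z ∉ DCB →
      7 ≤ pp1 (c z) + pp2 (c z) → 7 ≤ walkWeight wt l := by
    intro z hz hzA hzC hsum
    obtain ⟨l1, l2, rfl⟩ := List.append_of_mem hz
    obtain ⟨-, hh, hlast⟩ := hl
    have hw2 : IsWalk (z :: l2) z dcb := by
      refine ⟨by simp, rfl, ?_⟩
      rw [← hlast, List.getLast?_append_of_ne_nil _ (by simp : z :: l2 ≠ [])]
    have s2 : pp2 (c z) ≤ walkWeight wt (z :: l2) := key2 _ z hw2
    cases l1 with
    | nil =>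
      simp only [List.nil_append, List.head?_cons, Option.some.injEq] at hh
      exact absurd (hh ▸ habc) hzA
    | cons a l1' =>
      have hh' : a = abc := by simpa using hh
      have hw1 : IsWalk ((a :: l1') ++ [z]) abc z :=
        ⟨by simp, by simp [hh'], List.getLast?_concat⟩
      have s1 : pp1 (c z) ≤ walkWeight wt ((a :: l1') ++ [z]) := key1 _ z hw1
      rw [walkWeight_split wt z (a :: l1') l2]
      calc (7 : ℕ∞) ≤ pp1 (c z) + pp2 (c z) := hsum
        _ ≤ walkWeight wt ((a :: l1') ++ [z]) + walkWeight wt (z :: l2) :=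
            add_le_add s1 s2
  rcases hm with hu | hv
  · exact main u hu huA huC (by rw [hcu]; decide)
  · exact main v hv hvA hvC (by rw [hcv]; decide)
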